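/- Let λ be a singular cardinal and suppose ⟨C_α : α < λ⁺⟩ is a ⊠_λ-sequence (Ostaszewski square). Then 2^λ = λ⁺. Specifically, fixing a partition {H_i : i < λ} of λ⁺ into λ mutually disjoint sets each of size λ⁺, and setting X_α := {i < λ : H_i ∩ nacc(C_β) ≠ ∅ for some β ∈ nacc(C_α)} for α < λ⁺, one has P(λ) = {X_α : α < λ⁺} after identifying subsets of λ appropriately; in particular there are at most λ⁺ subsets of λ. -/

import Mathlib

open Ordinal Set

noncomputable section

/-- The set of accumulation points of `C` that belong to `C`. -/
def acc (C : Set Ordinal) : Set Ordinal :=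
  {β | β ∈ C ∧ ∀ γ < β, ∃ δ ∈ C, γ < δ ∧ δ < β}

/-- Non-accumulation points of `C`. -/
def nacc (C : Set Ordinal) : Set Ordinal := C \ acc C

/-- `X ∩ α` is cofinal in `α`. -/
def CofinalIn (X : Set Ordinal) (α : Ordinal) : Prop :=
  ∀ γ < α, ∃ δ ∈ X, γ < δ ∧ δ < α

/-- Accumulation points of `C` (not necessarily members of `C`). -/
def accPlus (C : Set Ordinal) : Set Ordinal :=
  {β | (∃ δ ∈ C, δ < β) ∧ ∀ γ < β, ∃ δ ∈ C, γ < δ ∧ δ < β}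

def IsClosedSet (C : Set Ordinal) : Prop := accPlus C ⊆ C

/-- `C` is a club (closed and unbounded) subset of `α`. -/
def IsClubIn (C : Set Ordinal) (α : Ordinal) : Prop :=
  C ⊆ Set.Iio α ∧ CofinalIn C α ∧ ∀ β < α, β ∈ accPlus C → β ∈ C

/-- The `i`-th element of the set of ordinals `C` (the inverse collapse of `C`). -/
def nth (C : Set Ordinal) (i : Ordinal) : Ordinal :=
  sInf (C \ Set.range (fun j : Set.Iio i => nth C j.1))
termination_by i
decreasing_by exact j.2

/-- The order type of a set of ordinals: the least `i` such that the first `i`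
elements of `C` exhaust `C`. -/
def otp (C : Set Ordinal) : Ordinal :=
  sInf {i | C ⊆ Set.range (fun j : Set.Iio i => nth C j.1)}

/-- The image of `E` under the order isomorphism (inverse collapse) `π_C : otp(C) → C`. -/
def collapseImage (C E : Set Ordinal) : Set Ordinal :=
  {β | β ∈ C ∧ otp (C ∩ Set.Iio β) ∈ E}

def IsStationaryIn (S : Set Ordinal) (α : Ordinal) : Prop :=
  ∀ D, IsClubIn D α → (S ∩ D).Nonempty

/-- A `□_λ`-sequence. -/
def IsSquareSeq (lam : Cardinal) (C : Ordinal → Set Ordinal) : Prop :=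
  ∀ α < (Order.succ lam).ord, Order.IsSuccLimit α →
    IsClubIn (C α) α ∧ otp (C α) ≤ lam.ord ∧
    ∀ β ∈ acc (C α), C β = C α ∩ Set.Iio β

/-- An Ostaszewski square (`⊠_λ`) sequence. -/
def IsOstSeq (lam : Cardinal) (C : Ordinal → Set Ordinal) : Prop :=
  IsSquareSeq lam C ∧
  ∀ A : Ordinal → Set Ordinal,
    (∀ i < lam.ord, CofinalIn (A i) (Order.succ lam).ord) →
    ∀ θ < lam.ord, Order.IsSuccLimit θ →
    ∀ D, IsClubIn D (Order.succ lam).ord →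
    ∃ α < (Order.succ lam).ord, otp (C α) = θ ∧
      ∀ i < θ, nth (C α) (i + 1) ∈ A i ∧
        ∃ β ∈ D, nth (C α) i < β ∧ β < nth (C α) (i + 1)

universe u

namespace Stmt7A

theorem pair_inj {i i' b b' : Ordinal.{u}} (hb : b < 2) (hb' : b' < 2)
    (h : 2*i+b = 2*i'+b') : i = i' ∧ b = b' := by
  have key : ∀ {j j' c c' : Ordinal.{u}}, c < 2 → j < j' → 2*j+c < 2*j'+c' := by
    intro j j' c c' hc hjj
    have h1 : 2*j+c < 2*(j+1) := by
      rw [mul_add_one 2 j]; exact add_lt_add_right hc _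
    have h2 : 2*(j+1) ≤ 2*j' := by
      have : j+1 ≤ j' := by rw [Ordinal.add_one_eq_succ]; exact Order.succ_le_of_lt hjj
      exact mul_le_mul_right this 2
    exact lt_of_lt_of_le h1 (h2.trans (le_add_right le_rfl))
  rcases lt_trichotomy i i' with hi | hi | hi
  · exact absurd h (ne_of_lt (key hb hi))
  · subst hi; exact ⟨rfl, (add_right_inj _).1 h⟩
  · exact absurd h.symm (ne_of_lt (key hb' hi))

variable {lam : Cardinal.{u}}

/-- The `i`-th "color" class with bit `b`. -/
def PSet (lam : Cardinal.{u}) (i b : Ordinal.{u}) : Set Ordinal.{u} :=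
  {d | d < (Order.succ lam).ord ∧ d % lam.ord = 2*i + b}

theorem pair_lt (hinf : Cardinal.aleph0 ≤ lam) {i b : Ordinal.{u}}
    (hi : i < lam.ord) (hb : b < 2) : 2*i+b < lam.ord := by
  rw [Cardinal.lt_ord] at hi ⊢
  rw [Ordinal.card_add, Ordinal.card_mul]
  have h2 : ((2:Ordinal.{u})).card < lam := by
    have : ((2:Ordinal.{u})).card < Cardinal.aleph0 := by
      simpa using Cardinal.nat_lt_aleph0 2
    exact lt_of_lt_of_le this hinf
  have hbc : b.card < lam := by
    have : b.card ≤ (2:Ordinal.{u}).card := Ordinal.card_le_card hb.le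
    exact lt_of_le_of_lt this h2
  exact Cardinal.add_lt_of_lt hinf (Cardinal.mul_lt_of_lt hinf h2 hi) hbc

theorem ord_ne_zero (hinf : Cardinal.aleph0 ≤ lam) : lam.ord ≠ 0 := by
  rw [← pos_iff_ne_zero, Cardinal.lt_ord]
  simpa using lt_of_lt_of_le Cardinal.aleph0_pos hinf

theorem PSet_index_lt (hinf : Cardinal.aleph0 ≤ lam) {j d : Ordinal.{u}}
    (hd : d ∈ PSet lam j 1) : j < lam.ord := by
  have h1 : d % lam.ord < lam.ord := Ordinal.mod_lt d (ord_ne_zero hinf)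
  rw [hd.2] at h1
  have h2 : j ≤ 2*j := by
    calc j = 1*j := (one_mul j).symm
    _ ≤ 2*j := mul_le_mul_left one_le_two j
  have h3 : j < 2*j+1 := lt_of_le_of_lt h2 (by
    rw [Ordinal.add_one_eq_succ]; exact Order.lt_succ _)
  exact lt_trans h3 h1

theorem PSet_disj {i i' b b' d : Ordinal.{u}}
    (hb : b < 2) (hb' : b' < 2)
    (h : d ∈ PSet lam i b) (h' : d ∈ PSet lam i' b') : i = i' ∧ b = b' :=
  pair_inj hb hb' (h.2.symm.trans h'.2)

theorem succ_ord_isLimit (hinf : Cardinal.aleph0 ≤ lam) :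
    Order.IsSuccLimit ((Order.succ lam).ord) :=
  Cardinal.isSuccLimit_ord (hinf.trans (Order.le_succ lam))

theorem PSet_cofinal (hinf : Cardinal.aleph0 ≤ lam) {i b : Ordinal.{u}}
    (hi : i < lam.ord) (hb : b < 2) :
    CofinalIn (PSet lam i b) (Order.succ lam).ord := by
  intro γ hγ
  have hμ : lam.ord ≠ 0 := ord_ne_zero hinf
  have hsucc : Cardinal.aleph0 ≤ Order.succ lam := hinf.trans (Order.le_succ lam)
  have hbound : lam.ord * (γ / lam.ord + 1) + (2*i+b) < (Order.succ lam).ord := by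
    rw [Cardinal.lt_ord, Ordinal.card_add, Ordinal.card_mul, Cardinal.card_ord]
    have hdivlt : (γ / lam.ord + 1) < (Order.succ lam).ord := by
      have hdle : γ / lam.ord ≤ γ := by
        apply Ordinal.div_le_of_le_mul
        calc γ = 1 * γ := (one_mul γ).symm
        _ ≤ lam.ord * γ := mul_le_mul_left (Ordinal.one_le_iff_ne_zero.2 hμ) γ
      have h5 : γ / lam.ord < (Order.succ lam).ord := lt_of_le_of_lt hdle hγ
      rw [Ordinal.add_one_eq_succ]; exact (succ_ord_isLimit hinf).succ_lt h5
    rw [Cardinal.lt_ord] at hdivlt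
    have hlam : lam < Order.succ lam := Order.lt_succ _
    have hpair : (2*i+b).card < Order.succ lam := by
      have h6 := pair_lt hinf hi hb
      rw [Cardinal.lt_ord] at h6
      exact lt_trans h6 hlam
    exact Cardinal.add_lt_of_lt hsucc (Cardinal.mul_lt_of_lt hsucc hlam hdivlt) hpair
  refine ⟨lam.ord * (γ / lam.ord + 1) + (2*i+b), ⟨hbound, ?_⟩, ?_, hbound⟩
  · rw [Ordinal.mul_add_mod_self, Ordinal.mod_eq_of_lt (pair_lt hinf hi hb)]
  · calc γ = lam.ord * (γ / lam.ord) + γ % lam.ord := (Ordinal.div_add_mod γ lam.ord).symm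
    _ < lam.ord * (γ / lam.ord) + lam.ord := add_lt_add_right (Ordinal.mod_lt γ hμ) _
    _ = lam.ord * (γ / lam.ord + 1) := (mul_add_one lam.ord (γ / lam.ord)).symm
    _ ≤ lam.ord * (γ / lam.ord + 1) + (2*i+b) := le_add_right le_rfl

/-- The subset of `λ` coded by (the successor-indexed points of) `C β`. -/
def codeSet (lam : Cardinal.{u}) (C : Ordinal.{u} → Set Ordinal.{u}) (β : Ordinal.{u}) :
    Set Ordinal.{u} :=
  {j | ∃ i : Ordinal.{u}, i + 1 < otp (C β) ∧ nth (C β) (i+1) ∈ PSet lam j 1}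

/-- The subset of `λ` coded by `α`, via two-step decoding. -/
def Yset (lam : Cardinal.{u}) (C : Ordinal.{u} → Set Ordinal.{u}) (α : Ordinal.{u}) :
    Set Ordinal.{u} :=
  {j | ∃ i : Ordinal.{u}, i + 1 < otp (C α) ∧ j ∈ codeSet lam C (nth (C α) (i+1))}

theorem club_Ioo (hinf : Cardinal.aleph0 ≤ lam) {γ0 : Ordinal.{u}}
    (hγ0 : γ0 < (Order.succ lam).ord) :
    IsClubIn {d | γ0 < d ∧ d < (Order.succ lam).ord} (Order.succ lam).ord := by
  have hlim := succ_ord_isLimit hinf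
  refine ⟨fun d hd => hd.2, ?_, ?_⟩
  · intro γ hγ
    have hm : max γ0 γ + 1 < (Order.succ lam).ord := by
      rw [Ordinal.add_one_eq_succ]; exact hlim.succ_lt (max_lt hγ0 hγ)
    refine ⟨max γ0 γ + 1, ⟨?_, hm⟩, ?_, hm⟩
    · exact lt_of_le_of_lt (le_max_left _ _)
        (by rw [Ordinal.add_one_eq_succ]; exact Order.lt_succ _)
    · exact lt_of_le_of_lt (le_max_right _ _)
        (by rw [Ordinal.add_one_eq_succ]; exact Order.lt_succ _)
  · rintro β hβ ⟨⟨d, hd, hdβ⟩, -⟩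
    exact ⟨lt_trans hd.1 hdβ, hβ⟩

section Guess
variable {C : Ordinal.{u} → Set Ordinal.{u}}
variable (hg : ∀ A : Ordinal.{u} → Set Ordinal.{u},
    (∀ i < lam.ord, CofinalIn (A i) (Order.succ lam).ord) →
    ∀ θ < lam.ord, Order.IsSuccLimit θ →
    ∀ D, IsClubIn D (Order.succ lam).ord →
    ∃ α < (Order.succ lam).ord, otp (C α) = θ ∧
      ∀ i < θ, nth (C α) (i + 1) ∈ A i ∧
        ∃ β ∈ D, nth (C α) i < β ∧ β < nth (C α) (i + 1))

include hg

theorem code_guess (hinf : Cardinal.aleph0 ≤ lam) (hinf' : Cardinal.aleph0 < lam)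
    (x : Set Ordinal.{u}) {δ : Ordinal.{u}} (hδ : δ < lam.ord) (hx : x ⊆ Set.Iio δ)
    (D : Set Ordinal.{u}) (hD : IsClubIn D (Order.succ lam).ord) :
    ∃ β < (Order.succ lam).ord, codeSet lam C β = x ∧
      nth (C β) (1 : Ordinal.{u}) < (Order.succ lam).ord ∧ ∃ d ∈ D, d < nth (C β) (1 : Ordinal.{u}) := by
  classical
  set θ' := δ + ω with hθ'def
  have hθ'lim : Order.IsSuccLimit θ' := Ordinal.isSuccLimit_add δ Ordinal.isSuccLimit_omega0
  have hθ'lt : θ' < lam.ord := by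
    rw [hθ'def, Cardinal.lt_ord, Ordinal.card_add, Ordinal.card_omega0]
    exact Cardinal.add_lt_of_lt hinf (Cardinal.lt_ord.1 hδ) hinf'
  have hδθ' : δ < θ' := by
    rw [hθ'def]
    simpa using add_lt_add_left Ordinal.omega0_pos δ
  set A : Ordinal.{u} → Set Ordinal.{u} :=
    fun i => PSet lam i (if i ∈ x then 1 else 0) with hAdef
  have hAcof : ∀ i < lam.ord, CofinalIn (A i) (Order.succ lam).ord := by
    intro i hi
    rw [hAdef]
    by_cases h : i ∈ x
    · simpa [h] using PSet_cofinal hinf hi one_lt_two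
    · simpa [h] using PSet_cofinal hinf hi two_pos
  obtain ⟨α, hα, hotp, hcond⟩ := hg A hAcof θ' hθ'lt hθ'lim D hD
  have hmem : ∀ i, i < θ' → nth (C α) (i+1) ∈ PSet lam i (if i ∈ x then 1 else 0) := by
    intro i hi
    have := (hcond i hi).1
    rwa [hAdef] at this
  have hcode : codeSet lam C α = x := by
    ext j
    constructor
    · rintro ⟨i, hi1, hmemj⟩
      rw [hotp] at hi1
      have hi : i < θ' := lt_trans
        (by rw [Ordinal.add_one_eq_succ]; exact Order.lt_succ i) hi1
      obtain ⟨hji, hb⟩ := PSet_disj one_lt_two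
        (by split <;> norm_num) hmemj (hmem i hi)
      by_cases hix : i ∈ x
      · rwa [hji]
      · rw [if_neg hix] at hb; norm_num at hb
    · intro hj
      have hjδ : j < δ := hx hj
      have hj1 : j + 1 < θ' := by
        have h7 : j + 1 ≤ δ := by
          rw [Ordinal.add_one_eq_succ]; exact Order.succ_le_of_lt hjδ
        exact lt_of_le_of_lt h7 hδθ'
      have hjθ : j < θ' := lt_trans
        (by rw [Ordinal.add_one_eq_succ]; exact Order.lt_succ j) hj1
      have h8 := hmem j hjθ
      rw [if_pos hj] at h8
      exact ⟨j, by rw [hotp]; exact hj1, h8⟩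
  have h0 := hcond 0 hθ'lim.pos
  obtain ⟨d, hdD, -, hdlt⟩ := h0.2
  have h01 : nth (C α) (0+1) ∈ PSet lam 0 (if (0:Ordinal.{u}) ∈ x then 1 else 0) :=
    hmem 0 hθ'lim.pos
  refine ⟨α, hα, hcode, ?_, ⟨d, hdD, ?_⟩⟩
  · have := h01.1
    rwa [zero_add] at this
  · rwa [zero_add] at hdlt

theorem Sx_cofinal (hinf : Cardinal.aleph0 ≤ lam) (hinf' : Cardinal.aleph0 < lam)
    (x : Set Ordinal.{u}) {δ : Ordinal.{u}} (hδ : δ < lam.ord) (hx : x ⊆ Set.Iio δ) :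
    CofinalIn {β | β < (Order.succ lam).ord ∧ codeSet lam C β = x}
      (Order.succ lam).ord := by
  classical
  intro γ hγ
  by_contra hcon
  push_neg at hcon
  have hbd : ∀ β, β < (Order.succ lam).ord → codeSet lam C β = x → β ≤ γ := by
    intro β h1 h2
    by_contra hb
    push_neg at hb
    exact absurd (hcon β ⟨h1, h2⟩ hb) (not_le.2 h1)
  have hγ1 : γ + 1 < (Order.succ lam).ord := by
    rw [Ordinal.add_one_eq_succ]; exact (succ_ord_isLimit hinf).succ_lt hγ
  let em : (γ+1).ToType → Ordinal.{u} := fun t => (((Ordinal.ToType.mk (o := γ+1))).symm t : Ordinal)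
  let G : (γ+1).ToType → Ordinal.{u} := fun t =>
    if h : codeSet lam C (em t) = x ∧ nth (C (em t)) (1 : Ordinal.{u}) < (Order.succ lam).ord
    then nth (C (em t)) (1 : Ordinal.{u}) else 0
  have hGlt : ∀ t, G t < (Order.succ lam).ord := by
    intro t
    by_cases h : codeSet lam C (em t) = x ∧ nth (C (em t)) (1 : Ordinal.{u}) < (Order.succ lam).ord
    · rw [show G t = nth (C (em t)) (1 : Ordinal.{u}) from dif_pos h]; exact h.2
    · rw [show G t = 0 from dif_neg h]
      exact (succ_ord_isLimit hinf).pos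
  have hsup : iSup G < (Order.succ lam).ord := by
    apply Ordinal.iSup_lt_ord _ hGlt
    rw [Cardinal.mk_toType]
    calc (γ+1).card < Order.succ lam := Cardinal.lt_ord.1 hγ1
    _ ≤ ((Order.succ lam).ord).cof := (Cardinal.isRegular_succ hinf).2
  have hγs : max γ (iSup G) < (Order.succ lam).ord := max_lt hγ hsup
  obtain ⟨β, hβ, hcode, hnth1, d, hdD, hdlt⟩ :=
    code_guess hg hinf hinf' x hδ hx _ (club_Ioo hinf hγs)
  have hβγ : β ≤ γ := hbd β hβ hcode
  have hβ1 : β < γ + 1 := by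
    rw [Ordinal.add_one_eq_succ]; exact Order.lt_succ_iff.2 hβγ
  set t := (Ordinal.ToType.mk (o := γ+1)) ⟨β, hβ1⟩ with htdef
  have hemt : em t = β := by
    show (((Ordinal.ToType.mk (o := γ+1))).symm t : Ordinal) = β
    rw [htdef, OrderIso.symm_apply_apply]
  have hGt : G t = nth (C β) (1 : Ordinal.{u}) := by
    have hc : codeSet lam C (em t) = x ∧ nth (C (em t)) (1 : Ordinal.{u}) < (Order.succ lam).ord := by
      rw [hemt]; exact ⟨hcode, hnth1⟩
    rw [show G t = nth (C (em t)) (1 : Ordinal.{u}) from dif_pos hc, hemt]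
  have h1 : nth (C β) (1 : Ordinal.{u}) ≤ iSup G := by
    rw [← hGt]; exact Ordinal.le_iSup G t
  have h2 : iSup G < nth (C β) (1 : Ordinal.{u}) :=
    lt_of_le_of_lt (le_max_right γ (iSup G)) (lt_trans hdD.1 hdlt)
  exact absurd h1 (not_le.2 h2)

theorem exists_code (hinf : Cardinal.aleph0 ≤ lam) (hinf' : Cardinal.aleph0 < lam)
    (hcof : lam.ord.cof < lam) (X : Set Ordinal.{u}) (hX : X ⊆ Set.Iio lam.ord) :
    ∃ α < (Order.succ lam).ord, Yset lam C α = X := by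
  classical
  have hμlim : Order.IsSuccLimit lam.ord := Cardinal.isSuccLimit_ord hinf
  have hcof0 : Cardinal.aleph0 ≤ lam.ord.cof := Ordinal.aleph0_le_cof.2 hμlim
  have hθlim : Order.IsSuccLimit ((lam.ord.cof).ord) := Cardinal.isSuccLimit_ord hcof0
  set θ := (lam.ord.cof).ord with hθdef
  have hθlt : θ < lam.ord := Cardinal.ord_lt_ord.2 hcof
  obtain ⟨ι, g, hlsub, hmk⟩ := Ordinal.exists_lsub_cof lam.ord
  have hmk2 : Cardinal.mk (θ.ToType) = Cardinal.mk ι := by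
    rw [Cardinal.mk_toType, hθdef, Cardinal.card_ord, hmk]
  obtain ⟨e⟩ := Cardinal.eq.1 hmk2
  let f : Ordinal.{u} → Ordinal.{u} := fun i =>
    if h : i < θ then g (e ((Ordinal.ToType.mk (o := θ)) ⟨i, h⟩)) else 0
  have hfval : ∀ i (h : i < θ), f i = g (e ((Ordinal.ToType.mk (o := θ)) ⟨i, h⟩)) :=
    fun i h => dif_pos h
  have hflt : ∀ i, i < θ → f i < lam.ord := by
    intro i h
    rw [hfval i h, ← hlsub]
    exact Ordinal.lt_lsub g _
  have hcover : ∀ j, j < lam.ord → ∃ i, i < θ ∧ j < f i := by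
    intro j hj
    have hj1 : j + 1 < lam.ord := by
      rw [Ordinal.add_one_eq_succ]; exact hμlim.succ_lt hj
    rw [← hlsub] at hj1
    obtain ⟨t, ht⟩ := Ordinal.lt_lsub_iff.1 hj1
    obtain ⟨s, hs⟩ : ∃ s : Set.Iio θ, (Ordinal.ToType.mk (o := θ)) s = e.symm t :=
      ⟨((Ordinal.ToType.mk (o := θ))).symm (e.symm t), OrderIso.apply_symm_apply _ _⟩
    refine ⟨(s : Ordinal), s.2, ?_⟩
    have hfs : f (s : Ordinal) = g t := by
      rw [hfval _ s.2]
      congr 1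
      rw [show (⟨(s : Ordinal), s.2⟩ : Set.Iio θ) = s from rfl, hs,
        Equiv.apply_symm_apply]
    rw [hfs]
    exact lt_of_lt_of_le
      (by rw [Ordinal.add_one_eq_succ]; exact Order.lt_succ j) ht
  set A : Ordinal.{u} → Set Ordinal.{u} := fun i =>
    if i < θ then {β | β < (Order.succ lam).ord ∧ codeSet lam C β = X ∩ Set.Iio (f i)}
    else Set.Iio (Order.succ lam).ord with hAdef
  have hνlim := succ_ord_isLimit hinf
  have hcofIio : CofinalIn (Set.Iio (Order.succ lam).ord) (Order.succ lam).ord := by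
    intro γ hγ
    have hγ1 : γ + 1 < (Order.succ lam).ord := by
      rw [Ordinal.add_one_eq_succ]; exact hνlim.succ_lt hγ
    exact ⟨γ+1, hγ1, by rw [Ordinal.add_one_eq_succ]; exact Order.lt_succ γ, hγ1⟩
  have hA : ∀ i < lam.ord, CofinalIn (A i) (Order.succ lam).ord := by
    intro i hi
    rw [hAdef]
    by_cases h : i < θ
    · simpa [h] using Sx_cofinal hg hinf hinf' (X ∩ Set.Iio (f i)) (hflt i h)
        Set.inter_subset_right
    · simpa [h] using hcofIio
  have hD : IsClubIn (Set.Iio (Order.succ lam).ord) (Order.succ lam).ord :=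
    ⟨subset_rfl, hcofIio, fun β hβ _ => hβ⟩
  obtain ⟨α, hα, hotp, hcond⟩ := hg A hA θ hθlt hθlim _ hD
  have hmem : ∀ i, i < θ →
      nth (C α) (i+1) < (Order.succ lam).ord ∧
      codeSet lam C (nth (C α) (i+1)) = X ∩ Set.Iio (f i) := by
    intro i hi
    have := (hcond i hi).1
    rw [hAdef] at this
    simpa [hi] using this
  refine ⟨α, hα, ?_⟩
  ext j
  constructor
  · rintro ⟨i, hi1, hj⟩
    rw [hotp] at hi1
    have hi : i < θ := lt_trans
      (by rw [Ordinal.add_one_eq_succ]; exact Order.lt_succ i) hi1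
    rw [(hmem i hi).2] at hj
    exact hj.1
  · intro hj
    obtain ⟨i, hiθ, hjf⟩ := hcover j (hX hj)
    have hi1 : i + 1 < θ := by
      rw [Ordinal.add_one_eq_succ]; exact hθlim.succ_lt hiθ
    refine ⟨i, by rw [hotp]; exact hi1, ?_⟩
    rw [(hmem i hiθ).2]
    exact ⟨hj, hjf⟩

end Guess
end Stmt7A

theorem stmt7 (lam : Cardinal) (hinf : Cardinal.aleph0 ≤ lam) (hsing : ¬lam.IsRegular)
    (C : Ordinal → Set Ordinal) (hC : IsOstSeq lam C) :
    (2 : Cardinal) ^ lam = Order.succ lam := by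
  classical
  have hinf' : Cardinal.aleph0 < lam :=
    lt_of_le_of_ne hinf (fun h => hsing (h ▸ Cardinal.isRegular_aleph0))
  have hcof : lam.ord.cof < lam := by
    by_contra h
    push_neg at h
    exact hsing ⟨hinf, h⟩
  have hg := hC.2
  have hsurj : Function.Surjective (fun α : Set.Iio (Order.succ lam).ord =>
      {x : Set.Iio lam.ord | (x : Ordinal) ∈ Stmt7A.Yset lam C α}) := by
    intro T
    obtain ⟨α, hα, hY⟩ := Stmt7A.exists_code hg hinf hinf' hcof (Subtype.val '' T)
      (by rintro _ ⟨x, -, rfl⟩; exact x.2)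
    refine ⟨⟨α, hα⟩, ?_⟩
    ext x
    simp only [Set.mem_setOf_eq, hY]
    constructor
    · rintro ⟨x', hx', hval⟩
      exact Subtype.ext hval ▸ hx'
    · intro hx
      exact ⟨x, hx, rfl⟩
  have hle : Cardinal.mk (Set (Set.Iio lam.ord)) ≤ Cardinal.mk (Set.Iio (Order.succ lam).ord) :=
    Cardinal.mk_le_of_surjective hsurj
  rw [Cardinal.mk_set, Ordinal.mk_Iio_ordinal, Ordinal.mk_Iio_ordinal,
    Cardinal.card_ord, Cardinal.card_ord, ← Cardinal.lift_two_power,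
    Cardinal.lift_le] at hle
  exact le_antisymm hle (Order.succ_le_of_lt (Cardinal.cantor lam))

end
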